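/- In the polynomial ring ℂ[x_1,…,x_6] (with x_1,…,x_6 standing for the variables p_{12}, p_{21}, p_{23}, p_{32}, p_{31}, p_{13}), let P := 3(x_1x_3x_5 − x_2x_4x_6) + x_1x_3x_6 + x_1x_4x_5 + x_2x_3x_5 − x_1x_4x_6 − x_2x_3x_6 − x_2x_4x_5. Then for every weight w ∈ ℤ^6 and every nonzero scalar c ∈ ℂ, the initial form P_w is not equal to c·(x_1x_3x_5 − x_2x_4x_6). (This shows that the quasi-symmetry family for the 3-cycle, whose special fiber is defined by the binomial p_{12}p_{23}p_{31} − p_{21}p_{32}p_{13}, is not a weight degeneration.) -/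
import Mathlib


open MvPolynomial

/-- `w(f) = min { w·α : α in the support of f }` (junk value `0` for `f = 0`). -/
noncomputable def wval {m : ℕ} (w : Fin m → ℤ) (f : MvPolynomial (Fin m) ℂ) : ℤ :=
  if h : f.support.Nonempty then f.support.inf' h (fun α => ∑ i, w i * (α i : ℤ)) else 0

/-- The initial form `f_w`: the sum of the terms `c_α x^α` of `f` with `w·α = w(f)`. -/
noncomputable def initialForm {m : ℕ} (w : Fin m → ℤ) (f : MvPolynomial (Fin m) ℂ) :
    MvPolynomial (Fin m) ℂ :=
  ∑ α ∈ f.support.filter (fun α => (∑ i, w i * (α i : ℤ)) = wval w f),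
    monomial α (coeff α f)

/-- The cubic `P` defining the quasi-symmetry family for the 3-cycle at `t = 1`,
with variables `x_0,…,x_5` standing for `p_12, p_21, p_23, p_32, p_31, p_13`. -/
noncomputable def quasiSymmetryCubic : MvPolynomial (Fin 6) ℂ :=
  3 * (X 0 * X 2 * X 4 - X 1 * X 3 * X 5)
    + X 0 * X 2 * X 5 + X 0 * X 3 * X 4 + X 1 * X 2 * X 4
    - X 0 * X 3 * X 5 - X 1 * X 2 * X 5 - X 1 * X 3 * X 4

/-- The exponent vector of `x_i x_j x_k`. -/
noncomputable def eMon (i j k : Fin 6) : Fin 6 →₀ ℕ :=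
  Finsupp.single i 1 + Finsupp.single j 1 + Finsupp.single k 1

lemma hXXX (i j k : Fin 6) :
    (X i * X j * X k : MvPolynomial (Fin 6) ℂ) = monomial (eMon i j k) 1 := by
  simp [eMon, X, monomial_mul]

lemma eMon_eq_iff (i j k i' j' k' : Fin 6) : eMon i j k = eMon i' j' k' ↔
    ∀ a, (if i = a then (1:ℕ) else 0)+(if j = a then 1 else 0)+(if k = a then 1 else 0)
      = (if i' = a then 1 else 0)+(if j' = a then 1 else 0)+(if k' = a then 1 else 0) := by
  rw [Finsupp.ext_iff]
  simp [eMon, Finsupp.single_apply]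

lemma three_eq : (3 : MvPolynomial (Fin 6) ℂ) = C 3 := (map_ofNat C 3).symm

lemma coeff_initialForm {m : ℕ} (w : Fin m → ℤ) (f : MvPolynomial (Fin m) ℂ)
    (β : Fin m →₀ ℕ) :
    coeff β (initialForm w f) =
      if (∑ i, w i * (β i : ℤ)) = wval w f then coeff β f else 0 := by
  unfold initialForm
  rw [coeff_sum]
  simp only [coeff_monomial]
  rw [Finset.sum_ite_eq' ]
  by_cases hβ : β ∈ f.support
  · simp [hβ]
  · have : coeff β f = 0 := by simpa [mem_support_iff, not_not] using hβ
    simp [hβ, this]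

lemma wval_le {m : ℕ} (w : Fin m → ℤ) (f : MvPolynomial (Fin m) ℂ)
    (α : Fin m →₀ ℕ) (hα : α ∈ f.support) :
    wval w f ≤ ∑ i, w i * (α i : ℤ) := by
  unfold wval
  rw [dif_pos ⟨α, hα⟩]
  exact Finset.inf'_le _ hα

lemma deg_eMon (w : Fin 6 → ℤ) (i j k : Fin 6) (hij : i ≠ j) (hik : i ≠ k) (hjk : j ≠ k) :
    ∑ a, w a * ((eMon i j k) a : ℤ) = w i + w j + w k := by
  have h : ∀ a, ((eMon i j k) a : ℤ)
      = (if i = a then 1 else 0) + (if j = a then 1 else 0) + (if k = a then 1 else 0) := by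
    intro a; simp [eMon, Finsupp.single_apply]
  simp only [h, mul_add]
  rw [Finset.sum_add_distrib, Finset.sum_add_distrib]
  simp [Finset.sum_ite_eq, mul_comm]

lemma coeff_P (d : Fin 6 →₀ ℕ) : coeff d quasiSymmetryCubic =
    3 * (if eMon 0 2 4 = d then 1 else 0) - 3 * (if eMon 1 3 5 = d then 1 else 0)
    + (if eMon 0 2 5 = d then 1 else 0) + (if eMon 0 3 4 = d then 1 else 0)
    + (if eMon 1 2 4 = d then 1 else 0) - (if eMon 0 3 5 = d then 1 else 0)
    - (if eMon 1 2 5 = d then 1 else 0) - (if eMon 1 3 4 = d then 1 else 0) := by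
  simp only [quasiSymmetryCubic, hXXX, three_eq, coeff_add, coeff_sub, coeff_C_mul,
    coeff_monomial, mul_sub]

theorem quasisymmetry_is_not_a_weight_degeneration :
    ∀ (w : Fin 6 → ℤ) (c : ℂ), c ≠ 0 →
      initialForm w quasiSymmetryCubic ≠ C c * (X 0 * X 2 * X 4 - X 1 * X 3 * X 5) := by
  intro w c hc h
  -- coefficients of P at the four key exponents
  have cA : coeff (eMon 0 2 4) quasiSymmetryCubic = 3 := by
    rw [coeff_P]
    simp (config := { decide := true }) [eMon_eq_iff]
  have cH : coeff (eMon 1 3 5) quasiSymmetryCubic = -3 := by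
    rw [coeff_P]
    simp (config := { decide := true }) [eMon_eq_iff]
  have cB : coeff (eMon 0 2 5) quasiSymmetryCubic = 1 := by
    rw [coeff_P]
    simp (config := { decide := true }) [eMon_eq_iff]
  have cB' : coeff (eMon 1 3 4) quasiSymmetryCubic = -1 := by
    rw [coeff_P]
    simp (config := { decide := true }) [eMon_eq_iff]
  -- coefficients of the RHS
  have rA : coeff (eMon 0 2 4) (C c * (X 0 * X 2 * X 4 - X 1 * X 3 * X 5)) = c := by
    simp (config := { decide := true }) [hXXX, coeff_C_mul, coeff_monomial, eMon_eq_iff]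
  have rH : coeff (eMon 1 3 5) (C c * (X 0 * X 2 * X 4 - X 1 * X 3 * X 5)) = -c := by
    simp (config := { decide := true }) [hXXX, coeff_C_mul, coeff_monomial, eMon_eq_iff]
  have rB : coeff (eMon 0 2 5) (C c * (X 0 * X 2 * X 4 - X 1 * X 3 * X 5)) = 0 := by
    simp (config := { decide := true }) [hXXX, coeff_C_mul, coeff_monomial, eMon_eq_iff]
  have rB' : coeff (eMon 1 3 4) (C c * (X 0 * X 2 * X 4 - X 1 * X 3 * X 5)) = 0 := by
    simp (config := { decide := true }) [hXXX, coeff_C_mul, coeff_monomial, eMon_eq_iff]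
  -- degrees
  have dA := deg_eMon w 0 2 4 (by decide) (by decide) (by decide)
  have dH := deg_eMon w 1 3 5 (by decide) (by decide) (by decide)
  have dB := deg_eMon w 0 2 5 (by decide) (by decide) (by decide)
  have dB' := deg_eMon w 1 3 4 (by decide) (by decide) (by decide)
  set v := wval w quasiSymmetryCubic with hv
  -- from the hypothesis, extract degree conditions
  have hA : w 0 + w 2 + w 4 = v := by
    have := congrArg (coeff (eMon 0 2 4)) h
    rw [coeff_initialForm, rA, cA, dA] at this
    by_contra hne
    rw [if_neg hne] at this
    exact hc this.symm
  have hH : w 1 + w 3 + w 5 = v := by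
    have := congrArg (coeff (eMon 1 3 5)) h
    rw [coeff_initialForm, rH, cH, dH] at this
    by_contra hne
    rw [if_neg hne] at this
    have : c = 0 := by linear_combination this
    exact hc this
  have hB : ¬ (w 0 + w 2 + w 5 = v) := by
    intro heq
    have := congrArg (coeff (eMon 0 2 5)) h
    rw [coeff_initialForm, rB, cB, dB, if_pos heq] at this
    exact one_ne_zero this
  have hB' : ¬ (w 1 + w 3 + w 4 = v) := by
    intro heq
    have := congrArg (coeff (eMon 1 3 4)) h
    rw [coeff_initialForm, rB', cB', dB', if_pos heq] at this
    simp at this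
  -- B and B' are in the support, so their degrees are ≥ v
  have mB : eMon 0 2 5 ∈ quasiSymmetryCubic.support := by
    rw [mem_support_iff, cB]; exact one_ne_zero
  have mB' : eMon 1 3 4 ∈ quasiSymmetryCubic.support := by
    rw [mem_support_iff, cB']; simp
  have lB := wval_le w quasiSymmetryCubic _ mB
  have lB' := wval_le w quasiSymmetryCubic _ mB'
  rw [dB, ← hv] at lB
  rw [dB', ← hv] at lB'
  omega
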